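/- Let d be odd, q = exp(2πi/d), P₀ the DFT matrix with entries d^{-1/2} q^{jk}, D = diag(q^{j(j+1)/2}), and k coprime to d. Then every entry of the matrix P₀* D^k P₀ has modulus d^{-1/2}. -/

import Mathlib

open Matrix

private lemma zpow_congr_mod {w : ℂ} (hw : w ≠ 0) {d : ℕ} (hwd : w ^ d = 1) {a b : ℤ}
    (h : a ≡ b [ZMOD (d:ℤ)]) : w ^ a = w ^ b := by
  obtain ⟨m, hm⟩ := h.dvd
  have hb : b = a + d * m := by linarith
  have hwdz : w ^ (d : ℤ) = 1 := by exact_mod_cast hwd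
  rw [hb, zpow_add₀ hw, _root_.zpow_mul, hwdz, _root_.one_zpow, mul_one]

theorem stmt_14 (d : ℕ) (hd : Odd d) (hd2 : 2 ≤ d) (q : ℂ)
    (hq : q = Complex.exp (2 * Real.pi * Complex.I / d))
    (D P₀ : Matrix (Fin d) (Fin d) ℂ)
    (hD : D = Matrix.diagonal fun j : Fin d => q ^ ((j : ℕ) * ((j : ℕ) + 1) / 2))
    (hP₀ : P₀ = Matrix.of fun j k : Fin d => ((1 / Real.sqrt d : ℝ) : ℂ) * q ^ ((j : ℕ) * (k : ℕ)))
    (k : ℕ) (hk : Nat.Coprime k d) :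
    ∀ i j, ‖(P₀ᴴ * D ^ k * P₀) i j‖ = 1 / Real.sqrt d := by
  intro i j
  have hdpos : 0 < d := by omega
  have hne : NeZero d := ⟨by omega⟩
  have hprim : IsPrimitiveRoot q d := by
    rw [hq]; exact Complex.isPrimitiveRoot_exp d (by omega)
  have hq0 : q ≠ 0 := by rw [hq]; exact Complex.exp_ne_zero _
  have hqd : q ^ d = 1 := hprim.pow_eq_one
  have hqconj : (starRingEnd ℂ) q = q⁻¹ := by
    exact (Complex.inv_eq_conj (Complex.norm_eq_one_of_pow_eq_one hqd (by omega))).symm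
  set w : ℂ := q ^ ((d+1)/2) with hwdef
  have hw0 : w ≠ 0 := pow_ne_zero _ hq0
  have hwd : w ^ d = 1 := by rw [hwdef, ← pow_mul, mul_comm, pow_mul, hqd, one_pow]
  have hw2 : w ^ 2 = q := by
    obtain ⟨e, he⟩ := hd
    have h1 : (d+1)/2 = e + 1 := by omega
    rw [hwdef, ← pow_mul, h1, show (e+1) * 2 = d + 1 by omega, pow_succ, hqd, one_mul]
  have hwconj : (starRingEnd ℂ) w = w⁻¹ := by
    rw [hwdef, map_pow, hqconj, inv_pow]
  have hconjw : ∀ z : ℤ, (starRingEnd ℂ) (w ^ z) = w ^ (-z) := by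
    intro z
    rw [map_zpow₀, hwconj, _root_.inv_zpow, _root_.zpow_neg]
  have hqconj' : ∀ n : ℕ, (starRingEnd ℂ) (q ^ n) = w ^ (-(2 * n : ℤ)) := by
    intro n
    rw [map_pow, hqconj, _root_.zpow_neg,
      show ((2*n:ℤ)) = ((2*n : ℕ) : ℤ) by push_cast; ring, zpow_natCast, pow_mul, hw2, inv_pow]
  have hqpow : ∀ n : ℕ, q ^ n = w ^ ((2 * n : ℤ)) := by
    intro n
    rw [show ((2*n:ℤ)) = ((2*n:ℕ):ℤ) by push_cast; ring, zpow_natCast, pow_mul, hw2]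
  have hT : ∀ m : ℕ, (q ^ (m*(m+1)/2)) ^ k = w ^ ((k : ℤ) * (m * (m+1))) := by
    intro m
    have h2 : 2 * (m*(m+1)/2) = m*(m+1) := Nat.mul_div_cancel' (Nat.even_mul_succ_self m).two_dvd
    rw [show ((k:ℤ) * (m*(m+1))) = ((k * (m*(m+1)) : ℕ) : ℤ) by push_cast; ring, zpow_natCast]
    have h3 : k * (m*(m+1)) = 2 * (m*(m+1)/2 * k) := by
      conv_lhs => rw [← h2]
      ring
    rw [h3, pow_mul, hw2, ← pow_mul]
  set c : ℤ := ((j:ℕ):ℤ) - ((i:ℕ):ℤ) with hc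
  set f : ℤ → ℤ := fun m => (k:ℤ) * (m*(m+1)) + 2*(m*c) with hf
  have fcong : ∀ {a b : ℤ}, a ≡ b [ZMOD (d:ℤ)] → f a ≡ f b [ZMOD (d:ℤ)] := by
    intro a b h
    exact ((h.mul (h.add_right 1)).mul_left _).add ((h.mul_right c).mul_left 2)
  set S : ℂ := ∑ m : Fin d, w ^ f ((m:ℕ):ℤ) with hS
  have hDk : D ^ k = diagonal (fun m : Fin d => w ^ ((k:ℤ) * ((m:ℕ) * ((m:ℕ)+1)))) := by
    rw [hD, Matrix.diagonal_pow]
    refine congrArg _ ?_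
    funext m
    rw [Pi.pow_apply]
    exact hT (m:ℕ)
  have hij : (P₀ᴴ * D ^ k * P₀) i j = ((1/Real.sqrt d : ℝ):ℂ)^2 * S := by
    rw [Matrix.mul_apply, hS, Finset.mul_sum]
    apply Finset.sum_congr rfl
    intro m _
    rw [hDk, Matrix.mul_diagonal, conjTranspose_apply, hP₀]
    simp only [of_apply, Complex.star_def, _root_.map_mul, Complex.conj_ofReal]
    rw [hqconj' ((m:ℕ)*(i:ℕ)), hqpow ((m:ℕ)*(j:ℕ))]
    have hexp : f ((m:ℕ):ℤ) = (-(2 * ((m:ℕ)*(i:ℕ)) : ℤ)) + ((k:ℤ) * ((m:ℕ) * ((m:ℕ)+1)))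
        + ((2 * ((m:ℕ)*(j:ℕ)) : ℤ)) := by
      simp only [hf, hc]; ring
    rw [hexp, zpow_add₀ hw0, zpow_add₀ hw0]
    simp only [Nat.cast_mul]
    ring
  have key : S * (starRingEnd ℂ) S = d := by
    rw [hS, map_sum]
    simp_rw [hconjw]
    rw [Finset.sum_mul_sum]
    have step1 : ∀ m n : Fin d, w ^ f ((m:ℕ):ℤ) * w ^ (-(f ((n:ℕ):ℤ)))
        = w ^ (f ((m:ℕ):ℤ) - f ((n:ℕ):ℤ)) := by
      intro m n
      rw [← zpow_add₀ hw0, sub_eq_add_neg]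
    simp_rw [step1]
    rw [Finset.sum_comm]
    have step2 : ∀ n : Fin d, (∑ m : Fin d, w ^ (f ((m:ℕ):ℤ) - f ((n:ℕ):ℤ)))
        = ∑ t : Fin d, w ^ f ((t:ℕ):ℤ) * (q ^ (k * (t:ℕ))) ^ (n:ℕ) := by
      intro n
      rw [← Equiv.sum_comp (Equiv.addLeft n) (fun m : Fin d => w ^ (f ((m:ℕ):ℤ) - f ((n:ℕ):ℤ)))]
      apply Finset.sum_congr rfl
      intro t _
      have hcast : ((((n + t : Fin d) : ℕ)) : ℤ) ≡ ((n:ℕ):ℤ) + ((t:ℕ):ℤ) [ZMOD (d:ℤ)] := by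
        rw [Fin.val_add]
        have h3 := Int.natCast_modEq_iff.mpr (Nat.mod_modEq ((n:ℕ)+(t:ℕ)) d)
        push_cast at h3
        exact h3
      have h1 : w ^ (f (((n + t : Fin d):ℕ):ℤ) - f ((n:ℕ):ℤ))
          = w ^ (f (((n:ℕ):ℤ) + ((t:ℕ):ℤ)) - f ((n:ℕ):ℤ)) :=
        zpow_congr_mod hw0 hwd ((fcong hcast).sub (Int.ModEq.refl _))
      have h2 : f (((n:ℕ):ℤ) + ((t:ℕ):ℤ)) - f ((n:ℕ):ℤ)
          = f ((t:ℕ):ℤ) + ((2*(k*(t:ℕ)*(n:ℕ)) : ℕ) : ℤ) := by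
        simp only [hf]; push_cast; ring
      show w ^ (f (((Equiv.addLeft n) t : Fin d).val : ℤ) - f ((n:ℕ):ℤ)) = _
      rw [show ((Equiv.addLeft n) t : Fin d) = n + t from rfl, h1, h2, zpow_add₀ hw0]
      congr 1
      rw [zpow_natCast, pow_mul, hw2, ← pow_mul, mul_assoc]
    simp_rw [step2]
    rw [Finset.sum_comm]
    have step3 : ∀ t : Fin d, (∑ n : Fin d, w ^ f ((t:ℕ):ℤ) * (q ^ (k*(t:ℕ))) ^ (n:ℕ))
        = if t = 0 then (d:ℂ) else 0 := by
      intro t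
      rw [← Finset.mul_sum]
      by_cases ht : t = 0
      · subst ht
        simp [hf]
      · rw [if_neg ht]
        have hx1 : q ^ (k * (t:ℕ)) ≠ 1 := by
          intro hcon
          have hdvd := (hprim.pow_eq_one_iff_dvd _).mp hcon
          have hdt : d ∣ (t:ℕ) := (Nat.Coprime.dvd_of_dvd_mul_left hk.symm) hdvd
          have ht0 : (t:ℕ) = 0 := Nat.eq_zero_of_dvd_of_lt hdt t.isLt
          exact ht (Fin.ext (by simp [ht0]))
        have hz : ∑ n : Fin d, (q ^ (k*(t:ℕ))) ^ (n:ℕ) = 0 := by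
          rw [Fin.sum_univ_eq_sum_range (fun n => (q ^ (k*(t:ℕ))) ^ n), geom_sum_eq hx1,
            ← pow_mul, mul_comm (k*(t:ℕ)) d, pow_mul, hqd, one_pow]
          simp
        rw [hz, mul_zero]
    simp_rw [step3]
    simp
  have hnormSq : Complex.normSq S = d := by
    have h4 := key
    rw [Complex.mul_conj] at h4
    exact_mod_cast h4
  have habsS : ‖S‖ = Real.sqrt d := by
    rw [Complex.norm_def, hnormSq]
  have hsd : 0 < Real.sqrt d := Real.sqrt_pos.mpr (by positivity)
  rw [hij, norm_mul, norm_pow, Complex.norm_real, Real.norm_eq_abs, habsS,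
    abs_of_nonneg (by positivity : (0:ℝ) ≤ 1 / Real.sqrt d)]
  rw [div_pow, one_pow, Real.sq_sqrt (by positivity)]
  rw [div_mul_eq_mul_div, one_mul, div_eq_div_iff (by positivity) (by positivity)]
  rw [Real.mul_self_sqrt (by positivity)]
  ring
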